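/- Let f : ℕ → ℂ and λ = f ∗ μ its Möbius transform, and assume ∑_{q≥1} |λ(q)|/q converges. Then the average of f over integers up to x satisfies (1/x)∑_{n ≤ x} f(n) → ∑_{q≥1} λ(q)/q as x → ∞, provided additionally ∑_{q≥1}|λ(q)| q^{β−1} < ∞ for some β > 0. -/

import Mathlib

open Finset Filter ArithmeticFunction

private lemma aux_lower (q : ℕ) (hq : 1 ≤ q) (x : ℝ) (hx : 1 ≤ x) :
    1 / (q:ℝ) - (1/q + 1)/x ≤ ((⌊x⌋₊ / q : ℕ) : ℝ) / x := by
  have hq0 : (0:ℝ) < q := by exact_mod_cast hq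
  have hx0 : (0:ℝ) < x := by linarith
  have h3 : (⌊x⌋₊ : ℝ) < (((⌊x⌋₊ / q : ℕ) : ℝ) + 1) * q := by
    have := Nat.div_add_mod ⌊x⌋₊ q
    have := Nat.mod_lt ⌊x⌋₊ (by omega : 0 < q)
    have : ⌊x⌋₊ < (⌊x⌋₊ / q + 1) * q := by
      rw [add_mul, one_mul, mul_comm]; omega
    exact_mod_cast this
  have h4 : x < (⌊x⌋₊ : ℝ) + 1 := Nat.lt_floor_add_one x
  rw [le_div_iff₀ hx0,
    show (1/(q:ℝ) - (1/q+1)/x)*x = (x - 1)/q - 1 by field_simp; ring,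
    sub_le_iff_le_add, div_le_iff₀ hq0]
  nlinarith

private lemma aux_upper (q : ℕ) (hq : 1 ≤ q) (x : ℝ) (hx : 1 ≤ x) :
    ((⌊x⌋₊ / q : ℕ) : ℝ) / x ≤ 1 / q := by
  have hq0 : (0:ℝ) < q := by exact_mod_cast hq
  have hx0 : (0:ℝ) < x := by linarith
  have h1 : ((⌊x⌋₊ / q : ℕ) : ℝ) ≤ (⌊x⌋₊ : ℝ) / q := Nat.cast_div_le
  have h2 : (⌊x⌋₊ : ℝ) ≤ x := Nat.floor_le hx0.le
  rw [div_le_div_iff₀ hx0 hq0]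
  calc ((⌊x⌋₊ / q : ℕ) : ℝ) * q ≤ ((⌊x⌋₊:ℝ)/q) * q := by nlinarith
    _ = (⌊x⌋₊ : ℝ) := by field_simp
    _ ≤ x := h2
    _ = 1 * x := by ring

private lemma aux_tendsto (q : ℕ) (hq : 1 ≤ q) :
    Tendsto (fun x : ℝ => ((⌊x⌋₊ / q : ℕ) : ℝ) / x) atTop (nhds (1 / q)) := by
  apply tendsto_of_tendsto_of_tendsto_of_le_of_le'
    (g := fun x : ℝ => 1 / (q:ℝ) - (1/q + 1)/x) (h := fun _ : ℝ => 1 / (q:ℝ))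
  · have : Tendsto (fun x : ℝ => (1/(q:ℝ) + 1)/x) atTop (nhds 0) :=
      tendsto_const_nhds.div_atTop tendsto_id
    simpa using tendsto_const_nhds.sub this
  · exact tendsto_const_nhds
  · filter_upwards [eventually_ge_atTop (1:ℝ)] with x hx using aux_lower q hq x hx
  · filter_upwards [eventually_ge_atTop (1:ℝ)] with x hx using aux_upper q hq x hx

/-- Let `f : ℕ → ℂ` and `λ = f ∗ μ`. If `∑ |λ(q)|/q < ∞` and
`∑ |λ(q)| q^{β−1} < ∞` for some `β > 0`, then
`(1/x) ∑_{n ≤ x} f(n) → ∑_{q ≥ 1} λ(q)/q` as `x → ∞`. -/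
theorem mean_value_of_moebius_transform (f : ℕ → ℂ) (lam : ℕ → ℂ)
    (hlam : ∀ q : ℕ, lam q = ∑ d ∈ q.divisors, f d * ((moebius (q / d) : ℤ) : ℂ))
    (hsum : Summable fun q : ℕ => ‖lam q‖ / q)
    (hβ : ∃ β : ℝ, 0 < β ∧ Summable fun q : ℕ => ‖lam q‖ * (q : ℝ) ^ (β - 1)) :
    Tendsto (fun x : ℝ => (∑ n ∈ Finset.Icc 1 ⌊x⌋₊, f n) / (x : ℂ))
      atTop (nhds (∑' q : ℕ, lam q / q)) := by
  -- Möbius inversion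
  have hinv : ∀ n > 0, ∑ q ∈ n.divisors, lam q = f n := by
    rw [sum_eq_iff_sum_mul_moebius_eq]
    intro n hn
    rw [Nat.sum_divisorsAntidiagonal' (f := fun a b => ((moebius a : ℤ) : ℂ) * f b), hlam]
    exact Finset.sum_congr rfl fun d _ => by ring
  -- hyperbola / sum swap
  have hswap : ∀ N : ℕ, ∑ n ∈ Finset.Icc 1 N, ∑ q ∈ n.divisors, lam q
      = ∑ q ∈ Finset.Icc 1 N, lam q * ((N / q : ℕ) : ℂ) := by
    intro N
    have h1 : ∀ n ∈ Finset.Icc 1 N, ∑ q ∈ n.divisors, lam q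
        = ∑ q ∈ Finset.Icc 1 N, if q ∣ n then lam q else 0 := by
      intro n hn
      simp only [Finset.mem_Icc] at hn
      rw [← Finset.sum_filter]
      apply Finset.sum_congr _ fun _ _ => rfl
      ext q
      simp only [Nat.mem_divisors, Finset.mem_filter, Finset.mem_Icc]
      constructor
      · intro ⟨hq, _⟩
        exact ⟨⟨Nat.one_le_iff_ne_zero.2 (fun h => by simp [h] at hq; omega),
          le_trans (Nat.le_of_dvd (by omega) hq) hn.2⟩, hq⟩
      · intro ⟨_, hq⟩; exact ⟨hq, by omega⟩
    rw [Finset.sum_congr rfl h1, Finset.sum_comm]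
    apply Finset.sum_congr rfl
    intro q hq
    rw [Finset.sum_ite, Finset.sum_const, Finset.sum_const_zero, add_zero]
    have : Finset.Icc 1 N = Finset.Ioc 0 N := rfl
    rw [this, Nat.Ioc_filter_dvd_card_eq_div]
    simp [mul_comm]
  -- finite sum = tsum
  have htsum : ∀ N : ℕ, ∑ q ∈ Finset.Icc 1 N, lam q * ((N / q : ℕ) : ℂ)
      = ∑' q : ℕ, lam q * ((N / q : ℕ) : ℂ) := by
    intro N
    refine (tsum_eq_sum ?_).symm
    intro q hq
    simp only [Finset.mem_Icc, not_and, not_le] at hq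
    rcases Nat.eq_zero_or_pos q with rfl | h
    · simp
    · have : N / q = 0 := Nat.div_eq_of_lt (by have := hq h; omega)
      simp [this]
  -- dominated convergence
  have key : Tendsto (fun x : ℝ => ∑' q : ℕ, lam q * ((⌊x⌋₊ / q : ℕ) : ℂ) / (x : ℂ))
      atTop (nhds (∑' q : ℕ, lam q / q)) := by
    apply tendsto_tsum_of_dominated_convergence (bound := fun q => ‖lam q‖ / q) hsum
    · intro q
      rcases Nat.eq_zero_or_pos q with rfl | hq
      · simpa using (tendsto_const_nhds : Tendsto (fun _ : ℝ => (0:ℂ)) atTop (nhds 0))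
      · have hr := aux_tendsto q hq
        have h2 : Tendsto (fun x : ℝ => lam q * ((((⌊x⌋₊ / q : ℕ) : ℝ) / x : ℝ) : ℂ))
            atTop (nhds (lam q * ((1 / (q:ℝ) : ℝ) : ℂ))) :=
          ((Complex.continuous_ofReal.tendsto _).comp hr).const_mul (lam q)
        have heq : (fun x : ℝ => lam q * ((((⌊x⌋₊ / q : ℕ) : ℝ) / x : ℝ) : ℂ))
            = fun x : ℝ => lam q * ((⌊x⌋₊ / q : ℕ) : ℂ) / (x : ℂ) := by
          funext x; push_cast; ring
        rw [heq] at h2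
        convert h2 using 2
        push_cast; ring
    · filter_upwards [eventually_ge_atTop (1:ℝ)] with x hx q
      rcases Nat.eq_zero_or_pos q with rfl | hq
      · simp
      · have hx0 : (0:ℝ) < x := by linarith
        have hb := aux_upper q hq x hx
        have hnorm : ‖lam q * ((⌊x⌋₊ / q : ℕ) : ℂ) / (x : ℂ)‖
            = ‖lam q‖ * (((⌊x⌋₊ / q : ℕ) : ℝ) / x) := by
          rw [norm_div, norm_mul]
          simp [Complex.norm_real, abs_of_pos hx0, mul_div_assoc]
        rw [hnorm, div_eq_mul_inv ‖lam q‖, ← one_div]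
        exact mul_le_mul_of_nonneg_left hb (norm_nonneg _)
  -- conclude by eventual equality
  apply Tendsto.congr' _ key
  filter_upwards [eventually_ge_atTop (1:ℝ)] with x hx
  have hx0 : (x:ℂ) ≠ 0 := by
    exact_mod_cast ne_of_gt (by linarith : (0:ℝ) < x)
  rw [tsum_div_const, ← htsum ⌊x⌋₊, ← hswap ⌊x⌋₊,
    Finset.sum_congr rfl fun n hn => hinv n (by simp only [Finset.mem_Icc] at hn; omega)]
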